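/- Let V₁ ⊆ ℝ^{d₁} and V₂ ⊆ ℝ^{d₂} be finite point configurations. Then the Theta rank of the product configuration V₁ × V₂ ⊆ ℝ^{d₁+d₂} satisfies Th(V₁ × V₂) = max(Th(V₁), Th(V₂)), and likewise the levelness satisfies Lev(V₁ × V₂) = max(Lev(V₁), Lev(V₂)). -/

import Mathlib

open MvPolynomial Set

noncomputable section

/-- `f` is an affine-linear polynomial (degree at most one). -/
def IsAffLin {ι : Type} (f : MvPolynomial ι ℝ) : Prop := f.totalDegree ≤ 1

/-- `f` is nonnegative on `V`. -/
def NonnegOn {ι : Type} (V : Set (ι → ℝ)) (f : MvPolynomial ι ℝ) : Prop :=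
  ∀ v ∈ V, 0 ≤ eval v f

/-- `ℓ` is `k`-sos with respect to `V`: on `V` it agrees with a sum of squares of
polynomials of degree at most `k`. -/
def IsKSos {ι : Type} (V : Set (ι → ℝ)) (k : ℕ) (ℓ : MvPolynomial ι ℝ) : Prop :=
  ∃ (s : ℕ) (h : Fin s → MvPolynomial ι ℝ),
    (∀ i, (h i).totalDegree ≤ k) ∧ ∀ v ∈ V, eval v ℓ = ∑ i, (eval v (h i)) ^ 2

/-- The Theta rank of a point configuration `V`. -/
def thetaRank {ι : Type} (V : Set (ι → ℝ)) : ℕ :=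
  sInf {k | ∀ ℓ, IsAffLin ℓ → NonnegOn V ℓ → IsKSos V k ℓ}

/-- `F` is a face of `V`. -/
def IsFaceOf {ι : Type} (V F : Set (ι → ℝ)) : Prop :=
  ∃ g, IsAffLin g ∧ NonnegOn V g ∧ F = {v ∈ V | eval v g = 0}

/-- `F` is a facet of `V`: an inclusion-maximal proper face. -/
def IsFacetOf {ι : Type} (V F : Set (ι → ℝ)) : Prop :=
  IsFaceOf V F ∧ F ≠ V ∧ ∀ F', IsFaceOf V F' → F' ≠ V → F ⊆ F' → F' = F

/-- `ℓ` is a facet-defining affine-linear function for `V`. -/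
def IsFacetDefining {ι : Type} (V : Set (ι → ℝ)) (ℓ : MvPolynomial ι ℝ) : Prop :=
  IsAffLin ℓ ∧ NonnegOn V ℓ ∧ IsFacetOf V {v ∈ V | eval v ℓ = 0}

/-- The levelness of a point configuration `V`. -/
def levelness {ι : Type} (V : Set (ι → ℝ)) : ℕ :=
  sInf {k | ∀ ℓ, IsFacetDefining V ℓ → ((fun v => eval v ℓ) '' V).ncard ≤ k}

/-- The product configuration of `V₁ ⊆ ℝ^{d₁}` and `V₂ ⊆ ℝ^{d₂}` inside
`ℝ^{d₁} × ℝ^{d₂} = ℝ^{d₁ + d₂}`, with coordinates indexed by `Fin d₁ ⊕ Fin d₂`. -/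
def prodConfig {d₁ d₂ : ℕ} (V₁ : Set (Fin d₁ → ℝ)) (V₂ : Set (Fin d₂ → ℝ)) :
    Set ((Fin d₁ ⊕ Fin d₂) → ℝ) :=
  {x | (fun i => x (Sum.inl i)) ∈ V₁ ∧ (fun j => x (Sum.inr j)) ∈ V₂}

namespace ThAux

variable {ι ι₁ ι₂ : Type}

lemma monom_classify (m : ι →₀ ℕ) (h : (m.sum fun _ e => e) ≤ 1) :
    m = 0 ∨ ∃ i, m = Finsupp.single i 1 := by
  classical
  rcases eq_or_ne m 0 with h0 | h0
  · exact Or.inl h0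
  · right
    obtain ⟨i, hi⟩ : ∃ i, m i ≠ 0 := by
      by_contra hc
      push_neg at hc
      exact h0 (Finsupp.ext fun j => hc j)
    have hiS : i ∈ m.support := Finsupp.mem_support_iff.mpr hi
    have h1 : m i ≤ m.sum fun _ e => e :=
      Finset.single_le_sum (fun j _ => Nat.zero_le _) hiS
    have hmi : m i = 1 := le_antisymm (h1.trans h) (Nat.one_le_iff_ne_zero.mpr hi)
    refine ⟨i, Finsupp.ext fun j => ?_⟩
    rcases eq_or_ne j i with rfl | hj
    · simp [hmi]
    · rw [Finsupp.single_apply, if_neg (by exact fun hh => hj hh.symm)]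
      by_contra hjne
      have hjS : j ∈ m.support := Finsupp.mem_support_iff.mpr hjne
      have h2 : m i + m j ≤ m.sum fun _ e => e := by
        rw [Finsupp.sum, ← Finset.sum_pair (fun hh : i = j => hj hh.symm)]
        refine Finset.sum_le_sum_of_subset ?_
        intro t ht
        simp only [Finset.mem_insert, Finset.mem_singleton] at ht
        rcases ht with rfl | rfl <;> assumption
      omega

lemma eval_affine_add {f : MvPolynomial ι ℝ} (hf : f.totalDegree ≤ 1) (a b : ι → ℝ) :
    eval (fun i => a i + b i) f = eval a f + eval b f - eval (fun _ => (0:ℝ)) f := by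
  classical
  rw [eval_eq, eval_eq, eval_eq, eval_eq, ← Finset.sum_add_distrib, ← Finset.sum_sub_distrib]
  refine Finset.sum_congr rfl fun m hm => ?_
  rcases monom_classify m ((le_totalDegree hm).trans hf) with rfl | ⟨i, rfl⟩
  · simp
  · rw [Finsupp.support_single_ne_zero i one_ne_zero]
    simp only [Finset.prod_singleton, Finsupp.single_eq_same, pow_one]
    ring

lemma totalDegree_aeval_le_one (g : ι₁ → MvPolynomial ι₂ ℝ) (hg : ∀ s, (g s).totalDegree ≤ 1)
    (p : MvPolynomial ι₁ ℝ) : (aeval g p).totalDegree ≤ p.totalDegree := by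
  classical
  conv_lhs => rw [p.as_sum]
  rw [map_sum]
  refine (totalDegree_finset_sum _ _).trans (Finset.sup_le fun m hm => ?_)
  rw [aeval_monomial]
  refine (totalDegree_mul _ _).trans ?_
  have h1 : (algebraMap ℝ (MvPolynomial ι₂ ℝ) (p.coeff m)).totalDegree = 0 := totalDegree_C _
  rw [h1, zero_add, Finsupp.prod]
  refine le_trans (totalDegree_finset_prod _ _) (le_trans ?_ (le_totalDegree hm))
  refine le_trans (Finset.sum_le_sum fun i _ =>
    (totalDegree_pow _ _).trans (Nat.mul_le_mul_left _ (hg i))) ?_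
  simp [Finsupp.sum]

lemma eval_aeval' (g : ι₁ → MvPolynomial ι₂ ℝ) (x : ι₂ → ℝ) (p : MvPolynomial ι₁ ℝ) :
    eval x (aeval g p) = eval (fun s => eval x (g s)) p := by
  induction p using MvPolynomial.induction_on with
  | C c => simp
  | add p q hp hq => simp only [map_add, hp, hq]
  | mul_X p i hp => simp only [map_mul, aeval_X, eval_X, eval_mul, hp]

def genProd (V₁ : Set (ι₁ → ℝ)) (V₂ : Set (ι₂ → ℝ)) : Set (ι₁ ⊕ ι₂ → ℝ) :=
  {z | (fun i => z (Sum.inl i)) ∈ V₁ ∧ (fun j => z (Sum.inr j)) ∈ V₂}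

variable {V₁ : Set (ι₁ → ℝ)} {V₂ : Set (ι₂ → ℝ)}

lemma elim_mem {x y} (hx : x ∈ V₁) (hy : y ∈ V₂) : Sum.elim x y ∈ genProd V₁ V₂ := ⟨hx, hy⟩

lemma mem_left {z} (hz : z ∈ genProd V₁ V₂) : (fun i => z (Sum.inl i)) ∈ V₁ := hz.1
lemma mem_right {z} (hz : z ∈ genProd V₁ V₂) : (fun j => z (Sum.inr j)) ∈ V₂ := hz.2

lemma genProd_finite (h₁ : V₁.Finite) (h₂ : V₂.Finite) : (genProd V₁ V₂).Finite := by
  have hs : genProd V₁ V₂ ⊆ (fun p : (ι₁ → ℝ) × (ι₂ → ℝ) => Sum.elim p.1 p.2) '' (V₁ ×ˢ V₂) := by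
    intro z hz
    exact ⟨(fun i => z (Sum.inl i), fun j => z (Sum.inr j)), ⟨hz.1, hz.2⟩,
      by funext s; cases s <;> rfl⟩
  exact ((h₁.prod h₂).image _).subset hs

/-- first component of an affine function on a sum type -/
def part₁ (ℓ : MvPolynomial (ι₁ ⊕ ι₂) ℝ) : MvPolynomial ι₁ ℝ :=
  aeval (Sum.elim X fun _ => 0) ℓ - C (eval (fun _ => (0:ℝ)) ℓ)

def part₂ (ℓ : MvPolynomial (ι₁ ⊕ ι₂) ℝ) : MvPolynomial ι₂ ℝ :=
  aeval (Sum.elim (fun _ => 0) X) ℓ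

lemma affLin_part₁ {ℓ : MvPolynomial (ι₁ ⊕ ι₂) ℝ} (h : IsAffLin ℓ) : IsAffLin (part₁ ℓ) := by
  refine (totalDegree_sub_C_le _ _).trans ?_
  refine (totalDegree_aeval_le_one _ ?_ _).trans h
  rintro (i | j)
  · simp [totalDegree_X]
  · simp

lemma affLin_part₂ {ℓ : MvPolynomial (ι₁ ⊕ ι₂) ℝ} (h : IsAffLin ℓ) : IsAffLin (part₂ ℓ) := by
  refine (totalDegree_aeval_le_one _ ?_ _).trans h
  rintro (i | j)
  · simp
  · simp [totalDegree_X]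

lemma eval_part₁ (ℓ : MvPolynomial (ι₁ ⊕ ι₂) ℝ) (x : ι₁ → ℝ) :
    eval x (part₁ ℓ) = eval (Sum.elim x fun _ => 0) ℓ - eval (fun _ => (0:ℝ)) ℓ := by
  rw [part₁, map_sub, eval_C, eval_aeval']
  have hfun : (fun s : ι₁ ⊕ ι₂ => eval x (Sum.elim X (fun _ => 0) s)) = Sum.elim x fun _ => (0:ℝ) := by
    funext s; cases s <;> simp
  rw [hfun]

lemma eval_part₂ (ℓ : MvPolynomial (ι₁ ⊕ ι₂) ℝ) (y : ι₂ → ℝ) :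
    eval y (part₂ ℓ) = eval (Sum.elim (fun _ => 0) y) ℓ := by
  rw [part₂, eval_aeval']
  have hfun : (fun s : ι₁ ⊕ ι₂ => eval y (Sum.elim (fun _ => 0) X s)) = Sum.elim (fun _ => (0:ℝ)) y := by
    funext s; cases s <;> simp
  rw [hfun]

lemma eval_decomp {ℓ : MvPolynomial (ι₁ ⊕ ι₂) ℝ} (h : IsAffLin ℓ) (z : ι₁ ⊕ ι₂ → ℝ) :
    eval z ℓ = eval (fun i => z (Sum.inl i)) (part₁ ℓ) + eval (fun j => z (Sum.inr j)) (part₂ ℓ) := by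
  rw [eval_part₁, eval_part₂]
  have key := eval_affine_add h (Sum.elim (fun i => z (Sum.inl i)) fun _ => 0)
    (Sum.elim (fun _ => 0) fun j => z (Sum.inr j))
  have hz : (fun s => Sum.elim (fun i => z (Sum.inl i)) (fun _ => 0) s
      + Sum.elim (fun _ => 0) (fun j => z (Sum.inr j)) s) = z := by
    funext s
    cases s <;> simp
  rw [hz] at key
  rw [key]
  ring

/-- lifting a polynomial on the first factor -/
def lift₁ (p : MvPolynomial ι₁ ℝ) : MvPolynomial (ι₁ ⊕ ι₂) ℝ := rename Sum.inl p

def lift₂ (p : MvPolynomial ι₂ ℝ) : MvPolynomial (ι₁ ⊕ ι₂) ℝ := rename Sum.inr p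

lemma eval_lift₁ (p : MvPolynomial ι₁ ℝ) (z : ι₁ ⊕ ι₂ → ℝ) :
    eval z (lift₁ p) = eval (fun i => z (Sum.inl i)) p := by
  rw [lift₁, eval_rename]; rfl

lemma eval_lift₂ (p : MvPolynomial ι₂ ℝ) (z : ι₁ ⊕ ι₂ → ℝ) :
    eval z (lift₂ p) = eval (fun j => z (Sum.inr j)) p := by
  rw [lift₂, eval_rename]; rfl

lemma affLin_lift₁ {p : MvPolynomial ι₁ ℝ} (h : IsAffLin p) : IsAffLin (lift₁ (ι₂ := ι₂) p) :=
  (totalDegree_rename_le _ _).trans h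

lemma affLin_lift₂ {p : MvPolynomial ι₂ ℝ} (h : IsAffLin p) : IsAffLin (lift₂ (ι₁ := ι₁) p) :=
  (totalDegree_rename_le _ _).trans h

/-- substituting a fixed second coordinate -/
def sub₁ (y₀ : ι₂ → ℝ) (h : MvPolynomial (ι₁ ⊕ ι₂) ℝ) : MvPolynomial ι₁ ℝ :=
  aeval (Sum.elim X fun j => C (y₀ j)) h

def sub₂ (x₀ : ι₁ → ℝ) (h : MvPolynomial (ι₁ ⊕ ι₂) ℝ) : MvPolynomial ι₂ ℝ :=
  aeval (Sum.elim (fun i => C (x₀ i)) X) h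

lemma eval_sub₁ (y₀ : ι₂ → ℝ) (h : MvPolynomial (ι₁ ⊕ ι₂) ℝ) (x : ι₁ → ℝ) :
    eval x (sub₁ y₀ h) = eval (Sum.elim x y₀) h := by
  rw [sub₁, eval_aeval']
  have hfun : (fun s : ι₁ ⊕ ι₂ => eval x (Sum.elim X (fun j => C (y₀ j)) s)) = Sum.elim x y₀ := by
    funext s; cases s <;> simp
  rw [hfun]

lemma eval_sub₂ (x₀ : ι₁ → ℝ) (h : MvPolynomial (ι₁ ⊕ ι₂) ℝ) (y : ι₂ → ℝ) :
    eval y (sub₂ x₀ h) = eval (Sum.elim x₀ y) h := by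
  rw [sub₂, eval_aeval']
  have hfun : (fun s : ι₁ ⊕ ι₂ => eval y (Sum.elim (fun i => C (x₀ i)) X s)) = Sum.elim x₀ y := by
    funext s; cases s <;> simp
  rw [hfun]

lemma deg_sub₁ (y₀ : ι₂ → ℝ) (h : MvPolynomial (ι₁ ⊕ ι₂) ℝ) :
    (sub₁ y₀ h).totalDegree ≤ h.totalDegree := by
  refine totalDegree_aeval_le_one _ ?_ _
  rintro (i | j)
  · simp [totalDegree_X]
  · simp

lemma deg_sub₂ (x₀ : ι₁ → ℝ) (h : MvPolynomial (ι₁ ⊕ ι₂) ℝ) :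
    (sub₂ x₀ h).totalDegree ≤ h.totalDegree := by
  refine totalDegree_aeval_le_one _ ?_ _
  rintro (i | j)
  · simp
  · simp [totalDegree_X]

lemma exists_interp {V : Set (ι → ℝ)} (hfin : V.Finite) :
    ∃ k : ℕ, ∀ φ : (ι → ℝ) → ℝ, (∀ v ∈ V, 0 ≤ φ v) →
      ∃ h : MvPolynomial ι ℝ, h.totalDegree ≤ k ∧ ∀ v ∈ V, φ v = (eval v h) ^ 2 := by
  classical
  have key : ∀ v w : ι → ℝ, ∃ q : MvPolynomial ι ℝ,
      q.totalDegree ≤ 1 ∧ (v ≠ w → eval v q = 1 ∧ eval w q = 0) := by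
    intro v w
    by_cases hvw : v = w
    · exact ⟨1, by simp [totalDegree_one], fun hc => absurd hvw hc⟩
    · obtain ⟨i, hi⟩ := Function.ne_iff.mp hvw
      refine ⟨(X i - C (w i)) * C (v i - w i)⁻¹, ?_, fun _ => ⟨?_, ?_⟩⟩
      · refine (totalDegree_mul _ _).trans ?_
        rw [totalDegree_C, Nat.add_zero]
        refine (totalDegree_sub _ _).trans ?_
        simp [totalDegree_X, totalDegree_C]
      · rw [eval_mul, eval_sub, eval_X, eval_C, eval_C]
        exact mul_inv_cancel₀ (sub_ne_zero.mpr hi)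
      · rw [eval_mul, eval_sub, eval_X, eval_C, eval_C]
        simp
  choose q hq1 hq2 using key
  refine ⟨hfin.toFinset.card, fun φ hφ => ?_⟩
  set P : (ι → ℝ) → MvPolynomial ι ℝ := fun v => ∏ w ∈ hfin.toFinset.erase v, q v w with hP
  have hPdeg : ∀ v, (P v).totalDegree ≤ hfin.toFinset.card := by
    intro v
    refine (totalDegree_finset_prod _ _).trans ?_
    refine le_trans (Finset.sum_le_sum fun w _ => hq1 v w) ?_
    simp only [Finset.sum_const, smul_eq_mul, mul_one]
    exact Finset.card_le_card (Finset.erase_subset _ _)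
  have hPeval : ∀ u ∈ hfin.toFinset, ∀ v ∈ hfin.toFinset,
      eval u (P v) = if v = u then 1 else 0 := by
    intro u hu v hv
    rw [hP]
    simp only [map_prod]
    rcases eq_or_ne v u with rfl | hvu
    · rw [if_pos rfl]
      refine Finset.prod_eq_one fun w hw => ?_
      exact (hq2 v w fun hh => (Finset.ne_of_mem_erase hw) hh.symm).1
    · rw [if_neg hvu]
      refine Finset.prod_eq_zero (Finset.mem_erase.mpr ⟨hvu.symm, hu⟩) ?_
      exact (hq2 v u fun hh => hvu hh).2
  refine ⟨∑ v ∈ hfin.toFinset, MvPolynomial.C (Real.sqrt (φ v)) * P v, ?_, ?_⟩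
  · refine (totalDegree_finset_sum _ _).trans (Finset.sup_le fun v _ => ?_)
    refine (totalDegree_mul _ _).trans ?_
    rw [totalDegree_C, Nat.zero_add]
    exact hPdeg v
  · intro u hu
    have hu' : u ∈ hfin.toFinset := hfin.mem_toFinset.mpr hu
    rw [map_sum]
    have : ∀ v ∈ hfin.toFinset,
        eval u (MvPolynomial.C (Real.sqrt (φ v)) * P v)
          = if v = u then Real.sqrt (φ u) else 0 := by
      intro v hv
      rw [eval_mul, eval_C, hPeval u hu' v hv]
      rcases eq_or_ne v u with rfl | hvu
      · simp
      · simp [hvu]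
    rw [Finset.sum_congr rfl this, Finset.sum_ite_eq' hfin.toFinset u
      (fun _ => Real.sqrt (φ u))]
    rw [if_pos hu']
    rw [Real.sq_sqrt (hφ u hu)]

lemma face_subset {V F : Set (ι → ℝ)} (h : IsFaceOf V F) : F ⊆ V := by
  obtain ⟨g, -, -, rfl⟩ := h
  exact sep_subset _ _

lemma empty_face (V : Set (ι → ℝ)) : IsFaceOf V ∅ := by
  refine ⟨1, ?_, fun v _ => by simp, ?_⟩
  · simp [IsAffLin]
  · ext v; simp

lemma exists_facetDefining {V : Set (ι → ℝ)} (hfin : V.Finite) (hne : V.Nonempty) :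
    ∃ ℓ, IsFacetDefining V ℓ := by
  classical
  have hCfin : {F : Set (ι → ℝ) | IsFaceOf V F ∧ F ≠ V}.Finite :=
    hfin.finite_subsets.subset fun F hF => face_subset hF.1
  have hCne : {F : Set (ι → ℝ) | IsFaceOf V F ∧ F ≠ V}.Nonempty :=
    ⟨∅, empty_face V, fun h => hne.ne_empty h.symm⟩
  obtain ⟨F, hF, hFmax⟩ := Set.Finite.exists_maximalFor id _ hCfin hCne
  obtain ⟨g, hg1, hg2, hg3⟩ := hF.1
  refine ⟨g, hg1, hg2, ?_, ?_, ?_⟩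
  · rw [← hg3]; exact hF.1
  · rw [← hg3]; exact hF.2
  · intro F' hF' hF'ne hsub
    rw [← hg3] at hsub ⊢
    exact Set.Subset.antisymm (hFmax ⟨hF', hF'ne⟩ hsub) hsub

lemma sos_mono {V : Set (ι → ℝ)} {k k' : ℕ} (hkk : k ≤ k') {ℓ} (h : IsKSos V k ℓ) :
    IsKSos V k' ℓ := by
  obtain ⟨s, hs, hdeg, heq⟩ := h
  exact ⟨s, hs, fun i => (hdeg i).trans hkk, heq⟩

def TS (V : Set (ι → ℝ)) : Set ℕ := {k | ∀ ℓ, IsAffLin ℓ → NonnegOn V ℓ → IsKSos V k ℓ}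

def LS (V : Set (ι → ℝ)) : Set ℕ :=
  {k | ∀ ℓ, IsFacetDefining V ℓ → ((fun v => eval v ℓ) '' V).ncard ≤ k}

lemma thetaRank_eq (V : Set (ι → ℝ)) : thetaRank V = sInf (TS V) := rfl

lemma levelness_eq (V : Set (ι → ℝ)) : levelness V = sInf (LS V) := rfl

lemma TS_upward {V : Set (ι → ℝ)} {k k'} (hkk : k ≤ k') (hk : k ∈ TS V) : k' ∈ TS V :=
  fun ℓ h1 h2 => sos_mono hkk (hk ℓ h1 h2)

lemma LS_upward {V : Set (ι → ℝ)} {k k'} (hkk : k ≤ k') (hk : k ∈ LS V) : k' ∈ LS V :=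
  fun ℓ h => (hk ℓ h).trans hkk

lemma TS_nonempty {V : Set (ι → ℝ)} (hfin : V.Finite) : (TS V).Nonempty := by
  obtain ⟨k, hk⟩ := exists_interp hfin
  refine ⟨k, fun ℓ _ hnn => ?_⟩
  obtain ⟨h, hdeg, hval⟩ := hk (fun v => eval v ℓ) hnn
  refine ⟨1, fun _ => h, fun _ => hdeg, fun v hv => ?_⟩
  rw [Fin.sum_univ_one]
  exact hval v hv

lemma LS_nonempty {V : Set (ι → ℝ)} (hfin : V.Finite) : (LS V).Nonempty :=
  ⟨V.ncard, fun ℓ _ => ncard_image_le hfin⟩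

lemma sInf_inter_max {A B : Set ℕ}
    (hA : ∀ {k k'}, k ≤ k' → k ∈ A → k' ∈ A) (hB : ∀ {k k'}, k ≤ k' → k ∈ B → k' ∈ B)
    (hAne : A.Nonempty) (hBne : B.Nonempty) :
    sInf (A ∩ B) = max (sInf A) (sInf B) := by
  have hAmem := Nat.sInf_mem hAne
  have hBmem := Nat.sInf_mem hBne
  have hmax : max (sInf A) (sInf B) ∈ A ∩ B :=
    ⟨hA (le_max_left _ _) hAmem, hB (le_max_right _ _) hBmem⟩
  refine le_antisymm (Nat.sInf_le hmax) ?_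
  have hm := Nat.sInf_mem (⟨_, hmax⟩ : (A ∩ B).Nonempty)
  exact max_le (Nat.sInf_le hm.1) (Nat.sInf_le hm.2)



section Theta

variable {V₁ : Set (ι₁ → ℝ)} {V₂ : Set (ι₂ → ℝ)}

lemma TS_prod_subset_left (hV₂ne : V₂.Nonempty) {k} (hk : k ∈ TS (genProd V₁ V₂)) :
    k ∈ TS V₁ := by
  intro ℓ₁ haff hnn
  obtain ⟨y₀, hy₀⟩ := hV₂ne
  have haff' : IsAffLin (lift₁ (ι₂ := ι₂) ℓ₁) := affLin_lift₁ haff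
  have hnn' : NonnegOn (genProd V₁ V₂) (lift₁ ℓ₁) := by
    intro z hz
    rw [eval_lift₁]
    exact hnn _ hz.1
  obtain ⟨s, h, hdeg, heq⟩ := hk _ haff' hnn'
  refine ⟨s, fun i => sub₁ y₀ (h i), fun i => (deg_sub₁ _ _).trans (hdeg i), fun x hx => ?_⟩
  have hmem : Sum.elim x y₀ ∈ genProd V₁ V₂ := elim_mem hx hy₀
  have key := heq _ hmem
  rw [eval_lift₁] at key
  simp only [eval_sub₁]
  exact key

lemma TS_prod_subset_right (hV₁ne : V₁.Nonempty) {k} (hk : k ∈ TS (genProd V₁ V₂)) :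
    k ∈ TS V₂ := by
  intro ℓ₂ haff hnn
  obtain ⟨x₀, hx₀⟩ := hV₁ne
  have haff' : IsAffLin (lift₂ (ι₁ := ι₁) ℓ₂) := affLin_lift₂ haff
  have hnn' : NonnegOn (genProd V₁ V₂) (lift₂ ℓ₂) := by
    intro z hz
    rw [eval_lift₂]
    exact hnn _ hz.2
  obtain ⟨s, h, hdeg, heq⟩ := hk _ haff' hnn'
  refine ⟨s, fun i => sub₂ x₀ (h i), fun i => (deg_sub₂ _ _).trans (hdeg i), fun y hy => ?_⟩
  have hmem : Sum.elim x₀ y ∈ genProd V₁ V₂ := elim_mem hx₀ hy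
  have key := heq _ hmem
  rw [eval_lift₂] at key
  simp only [eval_sub₂]
  exact key

lemma TS_inter_subset_prod (hV₂fin : V₂.Finite) (hV₂ne : V₂.Nonempty) {k}
    (hk₁ : k ∈ TS V₁) (hk₂ : k ∈ TS V₂) : k ∈ TS (genProd V₁ V₂) := by
  intro ℓ haff hnn
  obtain ⟨y₀, hy₀V, hy₀min⟩ :=
    Set.exists_min_image V₂ (fun y => eval y (part₂ ℓ)) hV₂fin hV₂ne
  set m₂ := eval y₀ (part₂ ℓ) with hm₂
  have haff₁ : IsAffLin (part₁ ℓ + C m₂) := by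
    refine (totalDegree_add _ _).trans (max_le (affLin_part₁ haff) ?_)
    simp [totalDegree_C]
  have haff₂ : IsAffLin (part₂ ℓ - C m₂) :=
    (totalDegree_sub_C_le _ _).trans (affLin_part₂ haff)
  have hnn₁ : NonnegOn V₁ (part₁ ℓ + C m₂) := by
    intro x hx
    have key := hnn _ (elim_mem hx hy₀V)
    rw [eval_decomp haff] at key
    rw [map_add, eval_C]
    exact key
  have hnn₂ : NonnegOn V₂ (part₂ ℓ - C m₂) := by
    intro y hy
    rw [map_sub, eval_C]
    exact sub_nonneg.mpr (hy₀min y hy)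
  obtain ⟨s₁, h₁, hdeg₁, heq₁⟩ := hk₁ _ haff₁ hnn₁
  obtain ⟨s₂, h₂, hdeg₂, heq₂⟩ := hk₂ _ haff₂ hnn₂
  refine ⟨s₁ + s₂, Fin.append (fun i => lift₁ (h₁ i)) (fun j => lift₂ (h₂ j)), ?_, ?_⟩
  · intro i
    refine Fin.addCases (fun i => ?_) (fun j => ?_) i
    · rw [Fin.append_left]
      exact (totalDegree_rename_le _ _).trans (hdeg₁ i)
    · rw [Fin.append_right]
      exact (totalDegree_rename_le _ _).trans (hdeg₂ j)
  · intro z hz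
    rw [Fin.sum_univ_add]
    simp only [Fin.append_left, Fin.append_right, eval_lift₁, eval_lift₂]
    rw [eval_decomp haff]
    have e₁ := heq₁ _ hz.1
    have e₂ := heq₂ _ hz.2
    rw [map_add, eval_C] at e₁
    rw [map_sub, eval_C] at e₂
    linarith [e₁, e₂]

lemma TS_prod_eq (hV₁fin : V₁.Finite) (hV₂fin : V₂.Finite)
    (hV₁ne : V₁.Nonempty) (hV₂ne : V₂.Nonempty) :
    TS (genProd V₁ V₂) = TS V₁ ∩ TS V₂ := by
  ext k
  constructor
  · exact fun hk => ⟨TS_prod_subset_left hV₂ne hk, TS_prod_subset_right hV₁ne hk⟩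
  · rintro ⟨hk₁, hk₂⟩
    exact TS_inter_subset_prod hV₂fin hV₂ne hk₁ hk₂

end Theta


section Level

variable {V₁ : Set (ι₁ → ℝ)} {V₂ : Set (ι₂ → ℝ)}

lemma argmin_face {V : Set (ι → ℝ)} {p : MvPolynomial ι ℝ} (hp : IsAffLin p) {m : ℝ}
    (hmin : ∀ v ∈ V, m ≤ eval v p) :
    IsFaceOf V {v ∈ V | eval v p = m} := by
  refine ⟨p - C m, (totalDegree_sub_C_le _ _).trans hp, ?_, ?_⟩
  · intro v hv
    rw [map_sub, eval_C]
    exact sub_nonneg.mpr (hmin v hv)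
  · ext v
    simp only [mem_sep_iff, map_sub, eval_C, sub_eq_zero]

lemma face_prod₁ {g₁ : MvPolynomial ι₁ ℝ} (hg : IsAffLin g₁) {m : ℝ}
    (hmin : ∀ x ∈ V₁, m ≤ eval x g₁) :
    IsFaceOf (genProd V₁ V₂) {z ∈ genProd V₁ V₂ | eval (fun i => z (Sum.inl i)) g₁ = m} := by
  refine ⟨lift₁ g₁ - C m, (totalDegree_sub_C_le _ _).trans (affLin_lift₁ hg), ?_, ?_⟩
  · intro z hz
    rw [map_sub, eval_C, eval_lift₁]
    exact sub_nonneg.mpr (hmin _ hz.1)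
  · ext z
    simp only [mem_sep_iff, map_sub, eval_C, eval_lift₁, sub_eq_zero]

lemma face_prod₂ {g₂ : MvPolynomial ι₂ ℝ} (hg : IsAffLin g₂) {m : ℝ}
    (hmin : ∀ y ∈ V₂, m ≤ eval y g₂) :
    IsFaceOf (genProd V₁ V₂) {z ∈ genProd V₁ V₂ | eval (fun j => z (Sum.inr j)) g₂ = m} := by
  refine ⟨lift₂ g₂ - C m, (totalDegree_sub_C_le _ _).trans (affLin_lift₂ hg), ?_, ?_⟩
  · intro z hz
    rw [map_sub, eval_C, eval_lift₂]
    exact sub_nonneg.mpr (hmin _ hz.2)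
  · ext z
    simp only [mem_sep_iff, map_sub, eval_C, eval_lift₂, sub_eq_zero]

lemma face_structure (hV₁fin : V₁.Finite) (hV₂fin : V₂.Finite)
    (hV₁ne : V₁.Nonempty) (hV₂ne : V₂.Nonempty)
    {ℓ : MvPolynomial (ι₁ ⊕ ι₂) ℝ} (haff : IsAffLin ℓ)
    (hnn : NonnegOn (genProd V₁ V₂) ℓ)
    (hFne : {z ∈ genProd V₁ V₂ | eval z ℓ = 0}.Nonempty) :
    ∃ m₁ m₂ : ℝ, m₁ + m₂ = 0 ∧
      (∀ x ∈ V₁, m₁ ≤ eval x (part₁ ℓ)) ∧ (∀ y ∈ V₂, m₂ ≤ eval y (part₂ ℓ)) ∧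
      (∃ x ∈ V₁, eval x (part₁ ℓ) = m₁) ∧ (∃ y ∈ V₂, eval y (part₂ ℓ) = m₂) ∧
      {z ∈ genProd V₁ V₂ | eval z ℓ = 0} =
        {z ∈ genProd V₁ V₂ | eval (fun i => z (Sum.inl i)) (part₁ ℓ) = m₁
          ∧ eval (fun j => z (Sum.inr j)) (part₂ ℓ) = m₂} := by
  obtain ⟨x₀, hx₀V, hx₀min⟩ :=
    Set.exists_min_image V₁ (fun x => eval x (part₁ ℓ)) hV₁fin hV₁ne
  obtain ⟨y₀, hy₀V, hy₀min⟩ :=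
    Set.exists_min_image V₂ (fun y => eval y (part₂ ℓ)) hV₂fin hV₂ne
  set m₁ := eval x₀ (part₁ ℓ) with hm₁def
  set m₂ := eval y₀ (part₂ ℓ) with hm₂def
  have hsum0 : 0 ≤ m₁ + m₂ := by
    have key := hnn _ (elim_mem hx₀V hy₀V)
    rw [eval_decomp haff] at key
    exact key
  obtain ⟨z₀, hz₀P, hz₀0⟩ := hFne
  have hz := hz₀0
  rw [eval_decomp haff] at hz
  have hm : m₁ + m₂ = 0 := by
    have h1 := hx₀min _ hz₀P.1
    have h2 := hy₀min _ hz₀P.2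
    linarith
  refine ⟨m₁, m₂, hm, fun x hx => hx₀min x hx, fun y hy => hy₀min y hy,
    ⟨x₀, hx₀V, rfl⟩, ⟨y₀, hy₀V, rfl⟩, ?_⟩
  ext z
  simp only [mem_sep_iff]
  constructor
  · rintro ⟨hzP, hz0⟩
    rw [eval_decomp haff] at hz0
    have h1 := hx₀min _ hzP.1
    have h2 := hy₀min _ hzP.2
    exact ⟨hzP, by linarith, by linarith⟩
  · rintro ⟨hzP, ha, hb⟩
    refine ⟨hzP, ?_⟩
    rw [eval_decomp haff, ha, hb]
    exact hm

/-- Every finite nonempty configuration admits some facet-defining function, hence `k ∈ LS`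
forces `1 ≤ k`. -/
lemma one_le_of_mem_LS {V : Set (ι → ℝ)} (hfin : V.Finite) (hne : V.Nonempty)
    {k : ℕ} (hk : k ∈ LS V) : 1 ≤ k := by
  obtain ⟨ℓ, hℓ⟩ := exists_facetDefining hfin hne
  refine le_trans ?_ (hk ℓ hℓ)
  have hpos : 0 < ((fun v => eval v ℓ) '' V).ncard :=
    (Set.ncard_pos (hfin.image _)).mpr (hne.image _)
  omega

/-- If the zero set of a facet-defining function is empty, the function is constant on `V`. -/
lemma const_of_facet_empty {V : Set (ι → ℝ)} (hfin : V.Finite) (hne : V.Nonempty)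
    {ℓ : MvPolynomial ι ℝ} (hℓ : IsFacetDefining V ℓ)
    (hemp : {v ∈ V | eval v ℓ = 0} = ∅) :
    ((fun v => eval v ℓ) '' V).ncard = 1 := by
  obtain ⟨haff, hnn, hface, hFneV, hmax⟩ := hℓ
  obtain ⟨v₀, hv₀V, hv₀min⟩ := Set.exists_min_image V (fun v => eval v ℓ) hfin hne
  set m := eval v₀ ℓ with hmdef
  have hAface : IsFaceOf V {v ∈ V | eval v ℓ = m} := argmin_face haff fun v hv => hv₀min v hv
  have hAne : ({v ∈ V | eval v ℓ = m} : Set _).Nonempty := ⟨v₀, hv₀V, rfl⟩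
  have hAV : {v ∈ V | eval v ℓ = m} = V := by
    by_contra hc
    have := hmax _ hAface hc (by rw [hemp]; exact empty_subset _)
    rw [this] at hAne
    rw [hemp] at hAne
    exact Set.not_nonempty_empty hAne
  have himg : (fun v => eval v ℓ) '' V = {m} := by
    apply Set.Subset.antisymm
    · rintro r ⟨v, hv, rfl⟩
      have : v ∈ {v ∈ V | eval v ℓ = m} := by rw [hAV]; exact hv
      exact this.2
    · rintro r (rfl : r = m)
      exact ⟨v₀, hv₀V, rfl⟩
  rw [himg, Set.ncard_singleton]


lemma genProd_nonempty (h₁ : V₁.Nonempty) (h₂ : V₂.Nonempty) : (genProd V₁ V₂).Nonempty := by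
  obtain ⟨x, hx⟩ := h₁
  obtain ⟨y, hy⟩ := h₂
  exact ⟨Sum.elim x y, elim_mem hx hy⟩

lemma facetDefining_lift₁ (hV₁fin : V₁.Finite) (hV₂fin : V₂.Finite)
    (hV₁ne : V₁.Nonempty) (hV₂ne : V₂.Nonempty)
    {ℓ₁ : MvPolynomial ι₁ ℝ} (h : IsFacetDefining V₁ ℓ₁)
    (hFne : {x ∈ V₁ | eval x ℓ₁ = 0}.Nonempty) :
    IsFacetDefining (genProd V₁ V₂) (lift₁ ℓ₁) ∧
      (fun z => eval z (lift₁ ℓ₁)) '' genProd V₁ V₂ = (fun x => eval x ℓ₁) '' V₁ := by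
  obtain ⟨haff, hnn, hface, hFneV, hmax⟩ := h
  obtain ⟨y₀, hy₀V⟩ := hV₂ne
  obtain ⟨xF, hxFV, hxF0⟩ := hFne
  have hnn' : NonnegOn (genProd V₁ V₂) (lift₁ ℓ₁) := fun z hz => by
    rw [eval_lift₁]; exact hnn _ hz.1
  constructor
  · refine ⟨affLin_lift₁ haff, hnn', ⟨lift₁ ℓ₁, affLin_lift₁ haff, hnn', rfl⟩, ?_, ?_⟩
    · obtain ⟨x₁, hx₁V, hx₁n⟩ : ∃ x₁ ∈ V₁, ¬ (eval x₁ ℓ₁ = 0) := by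
        by_contra hc
        push_neg at hc
        exact hFneV (Set.Subset.antisymm (sep_subset _ _) fun x hx => ⟨hx, hc x hx⟩)
      intro hc
      have hmem : Sum.elim x₁ y₀ ∈ {z ∈ genProd V₁ V₂ | eval z (lift₁ ℓ₁) = 0} := by
        rw [hc]; exact elim_mem hx₁V hy₀V
      have h0 := hmem.2
      rw [eval_lift₁] at h0
      exact hx₁n h0
    · intro G hGface hGneP hZG
      obtain ⟨g, hgaff, hgnn, hGeq⟩ := hGface
      subst hGeq
      have hGne' : {z ∈ genProd V₁ V₂ | eval z g = 0}.Nonempty := by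
        refine ⟨Sum.elim xF y₀, hZG ⟨elim_mem hxFV hy₀V, ?_⟩⟩
        rw [eval_lift₁]
        exact hxF0
      obtain ⟨m₁, m₂, hm, hmin₁, hmin₂, hA_ne, hB_ne, hstruct⟩ :=
        face_structure hV₁fin hV₂fin hV₁ne ⟨y₀, hy₀V⟩ hgaff hgnn hGne'
      have hmem : ∀ x ∈ V₁, eval x ℓ₁ = 0 → ∀ y ∈ V₂,
          eval x (part₁ g) = m₁ ∧ eval y (part₂ g) = m₂ := by
        intro x hxV hx0 y hyV
        have hzZ : Sum.elim x y ∈ {z ∈ genProd V₁ V₂ | eval z (lift₁ ℓ₁) = 0} := by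
          refine ⟨elim_mem hxV hyV, ?_⟩
          rw [eval_lift₁]
          exact hx0
        have hzG := hZG hzZ
        rw [hstruct] at hzG
        exact ⟨hzG.2.1, hzG.2.2⟩
      have hB : ∀ y ∈ V₂, eval y (part₂ g) = m₂ := fun y hy => (hmem xF hxFV hxF0 y hy).2
      have hA'face : IsFaceOf V₁ {x ∈ V₁ | eval x (part₁ g) = m₁} :=
        argmin_face (affLin_part₁ hgaff) hmin₁
      have hA'ne : {x ∈ V₁ | eval x (part₁ g) = m₁} ≠ V₁ := by
        intro hc
        apply hGneP
        refine Set.Subset.antisymm (sep_subset _ _) fun z hzP => ?_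
        rw [hstruct]
        refine ⟨hzP, ?_, hB _ hzP.2⟩
        have hxm : (fun i => z (Sum.inl i)) ∈ {x ∈ V₁ | eval x (part₁ g) = m₁} := by
          rw [hc]; exact hzP.1
        exact hxm.2
      have hFsubA' : {x ∈ V₁ | eval x ℓ₁ = 0} ⊆ {x ∈ V₁ | eval x (part₁ g) = m₁} := by
        rintro x ⟨hxV, hx0⟩
        exact ⟨hxV, (hmem x hxV hx0 y₀ hy₀V).1⟩
      have hA'F := hmax _ hA'face hA'ne hFsubA'
      rw [hstruct]
      ext z
      simp only [mem_sep_iff]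
      constructor
      · rintro ⟨hzP, h1, h2⟩
        have hxF : (fun i => z (Sum.inl i)) ∈ {x ∈ V₁ | eval x ℓ₁ = 0} := by
          rw [← hA'F]; exact ⟨hzP.1, h1⟩
        refine ⟨hzP, ?_⟩
        rw [eval_lift₁]
        exact hxF.2
      · rintro ⟨hzP, h0⟩
        rw [eval_lift₁] at h0
        have hxA' : (fun i => z (Sum.inl i)) ∈ {x ∈ V₁ | eval x (part₁ g) = m₁} := by
          rw [hA'F]; exact ⟨hzP.1, h0⟩
        exact ⟨hzP, hxA'.2, hB _ hzP.2⟩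
  · ext r
    constructor
    · rintro ⟨z, hzP, rfl⟩
      exact ⟨_, hzP.1, (eval_lift₁ ℓ₁ z).symm⟩
    · rintro ⟨x, hxV, rfl⟩
      refine ⟨Sum.elim x y₀, elim_mem hxV hy₀V, ?_⟩
      show eval (Sum.elim x y₀) (lift₁ ℓ₁) = eval x ℓ₁
      rw [eval_lift₁]
      rfl

lemma facetDefining_lift₂ (hV₁fin : V₁.Finite) (hV₂fin : V₂.Finite)
    (hV₁ne : V₁.Nonempty) (hV₂ne : V₂.Nonempty)
    {ℓ₂ : MvPolynomial ι₂ ℝ} (h : IsFacetDefining V₂ ℓ₂)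
    (hFne : {y ∈ V₂ | eval y ℓ₂ = 0}.Nonempty) :
    IsFacetDefining (genProd V₁ V₂) (lift₂ ℓ₂) ∧
      (fun z => eval z (lift₂ ℓ₂)) '' genProd V₁ V₂ = (fun y => eval y ℓ₂) '' V₂ := by
  obtain ⟨haff, hnn, hface, hFneV, hmax⟩ := h
  obtain ⟨x₀, hx₀V⟩ := hV₁ne
  obtain ⟨yF, hyFV, hyF0⟩ := hFne
  have hnn' : NonnegOn (genProd V₁ V₂) (lift₂ ℓ₂) := fun z hz => by
    rw [eval_lift₂]; exact hnn _ hz.2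
  constructor
  · refine ⟨affLin_lift₂ haff, hnn', ⟨lift₂ ℓ₂, affLin_lift₂ haff, hnn', rfl⟩, ?_, ?_⟩
    · obtain ⟨y₁, hy₁V, hy₁n⟩ : ∃ y₁ ∈ V₂, ¬ (eval y₁ ℓ₂ = 0) := by
        by_contra hc
        push_neg at hc
        exact hFneV (Set.Subset.antisymm (sep_subset _ _) fun y hy => ⟨hy, hc y hy⟩)
      intro hc
      have hmem : Sum.elim x₀ y₁ ∈ {z ∈ genProd V₁ V₂ | eval z (lift₂ ℓ₂) = 0} := by
        rw [hc]; exact elim_mem hx₀V hy₁V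
      have h0 := hmem.2
      rw [eval_lift₂] at h0
      exact hy₁n h0
    · intro G hGface hGneP hZG
      obtain ⟨g, hgaff, hgnn, hGeq⟩ := hGface
      subst hGeq
      have hGne' : {z ∈ genProd V₁ V₂ | eval z g = 0}.Nonempty := by
        refine ⟨Sum.elim x₀ yF, hZG ⟨elim_mem hx₀V hyFV, ?_⟩⟩
        rw [eval_lift₂]
        exact hyF0
      obtain ⟨m₁, m₂, hm, hmin₁, hmin₂, hA_ne, hB_ne, hstruct⟩ :=
        face_structure hV₁fin hV₂fin ⟨x₀, hx₀V⟩ hV₂ne hgaff hgnn hGne'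
      have hmem : ∀ y ∈ V₂, eval y ℓ₂ = 0 → ∀ x ∈ V₁,
          eval x (part₁ g) = m₁ ∧ eval y (part₂ g) = m₂ := by
        intro y hyV hy0 x hxV
        have hzZ : Sum.elim x y ∈ {z ∈ genProd V₁ V₂ | eval z (lift₂ ℓ₂) = 0} := by
          refine ⟨elim_mem hxV hyV, ?_⟩
          rw [eval_lift₂]
          exact hy0
        have hzG := hZG hzZ
        rw [hstruct] at hzG
        exact ⟨hzG.2.1, hzG.2.2⟩
      have hA : ∀ x ∈ V₁, eval x (part₁ g) = m₁ := fun x hx => (hmem yF hyFV hyF0 x hx).1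
      have hB'face : IsFaceOf V₂ {y ∈ V₂ | eval y (part₂ g) = m₂} :=
        argmin_face (affLin_part₂ hgaff) hmin₂
      have hB'ne : {y ∈ V₂ | eval y (part₂ g) = m₂} ≠ V₂ := by
        intro hc
        apply hGneP
        refine Set.Subset.antisymm (sep_subset _ _) fun z hzP => ?_
        rw [hstruct]
        refine ⟨hzP, hA _ hzP.1, ?_⟩
        have hym : (fun j => z (Sum.inr j)) ∈ {y ∈ V₂ | eval y (part₂ g) = m₂} := by
          rw [hc]; exact hzP.2
        exact hym.2
      have hFsubB' : {y ∈ V₂ | eval y ℓ₂ = 0} ⊆ {y ∈ V₂ | eval y (part₂ g) = m₂} := by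
        rintro y ⟨hyV, hy0⟩
        exact ⟨hyV, (hmem y hyV hy0 x₀ hx₀V).2⟩
      have hB'F := hmax _ hB'face hB'ne hFsubB'
      rw [hstruct]
      ext z
      simp only [mem_sep_iff]
      constructor
      · rintro ⟨hzP, h1, h2⟩
        have hyF' : (fun j => z (Sum.inr j)) ∈ {y ∈ V₂ | eval y ℓ₂ = 0} := by
          rw [← hB'F]; exact ⟨hzP.2, h2⟩
        refine ⟨hzP, ?_⟩
        rw [eval_lift₂]
        exact hyF'.2
      · rintro ⟨hzP, h0⟩
        rw [eval_lift₂] at h0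
        have hyB' : (fun j => z (Sum.inr j)) ∈ {y ∈ V₂ | eval y (part₂ g) = m₂} := by
          rw [hB'F]; exact ⟨hzP.2, h0⟩
        exact ⟨hzP, hA _ hzP.1, hyB'.2⟩
  · ext r
    constructor
    · rintro ⟨z, hzP, rfl⟩
      exact ⟨_, hzP.2, (eval_lift₂ ℓ₂ z).symm⟩
    · rintro ⟨y, hyV, rfl⟩
      refine ⟨Sum.elim x₀ y, elim_mem hx₀V hyV, ?_⟩
      show eval (Sum.elim x₀ y) (lift₂ ℓ₂) = eval y ℓ₂
      rw [eval_lift₂]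
      rfl


lemma facetDefining_unlift₁ (hV₂ne : V₂.Nonempty)
    {ℓ : MvPolynomial (ι₁ ⊕ ι₂) ℝ} (haff : IsAffLin ℓ)
    (hface : IsFacetOf (genProd V₁ V₂) {z ∈ genProd V₁ V₂ | eval z ℓ = 0})
    {m₁ m₂ : ℝ} (hm : m₁ + m₂ = 0)
    (hmin₁ : ∀ x ∈ V₁, m₁ ≤ eval x (part₁ ℓ))
    (hstruct : {z ∈ genProd V₁ V₂ | eval z ℓ = 0} =
      {z ∈ genProd V₁ V₂ | eval (fun i => z (Sum.inl i)) (part₁ ℓ) = m₁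
        ∧ eval (fun j => z (Sum.inr j)) (part₂ ℓ) = m₂})
    (hB : ∀ y ∈ V₂, eval y (part₂ ℓ) = m₂) :
    IsFacetDefining V₁ (part₁ ℓ + C m₂) ∧
      (fun z => eval z ℓ) '' genProd V₁ V₂ = (fun x => eval x (part₁ ℓ + C m₂)) '' V₁ := by
  obtain ⟨hfaceP, hFneP, hmaxP⟩ := hface
  obtain ⟨y₀, hy₀V⟩ := hV₂ne
  have haff₁ : IsAffLin (part₁ ℓ + C m₂) := by
    refine (totalDegree_add _ _).trans (max_le (affLin_part₁ haff) ?_)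
    simp [totalDegree_C]
  have hZ₁A : {x ∈ V₁ | eval x (part₁ ℓ + C m₂) = 0} = {x ∈ V₁ | eval x (part₁ ℓ) = m₁} := by
    ext x
    simp only [mem_sep_iff, map_add, eval_C]
    constructor
    · rintro ⟨hxV, h0⟩
      exact ⟨hxV, by linarith⟩
    · rintro ⟨hxV, h0⟩
      exact ⟨hxV, by linarith⟩
  have hnn₁ : NonnegOn V₁ (part₁ ℓ + C m₂) := by
    intro x hx
    rw [map_add, eval_C]
    have := hmin₁ x hx
    linarith
  constructor
  · refine ⟨haff₁, hnn₁, ⟨part₁ ℓ + C m₂, haff₁, hnn₁, rfl⟩, ?_, ?_⟩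
    · intro hc
      rw [hZ₁A] at hc
      apply hFneP
      refine Set.Subset.antisymm (sep_subset _ _) fun z hzP => ?_
      rw [hstruct]
      refine ⟨hzP, ?_, hB _ hzP.2⟩
      have hxm : (fun i => z (Sum.inl i)) ∈ {x ∈ V₁ | eval x (part₁ ℓ) = m₁} := by
        rw [hc]; exact hzP.1
      exact hxm.2
    · intro G₁ hG₁face hG₁ne hsub
      obtain ⟨g₁, hg₁aff, hg₁nn, hG₁eq⟩ := hG₁face
      subst hG₁eq
      have hG'face : IsFaceOf (genProd V₁ V₂)
          {z ∈ genProd V₁ V₂ | eval (fun i => z (Sum.inl i)) g₁ = 0} :=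
        face_prod₁ hg₁aff (m := 0) hg₁nn
      have hFsubG' : {z ∈ genProd V₁ V₂ | eval z ℓ = 0} ⊆
          {z ∈ genProd V₁ V₂ | eval (fun i => z (Sum.inl i)) g₁ = 0} := by
        intro z hz
        rw [hstruct] at hz
        obtain ⟨hzP, h1, h2⟩ := hz
        have hxZ₁ : (fun i => z (Sum.inl i)) ∈ {x ∈ V₁ | eval x (part₁ ℓ + C m₂) = 0} := by
          rw [hZ₁A]; exact ⟨hzP.1, h1⟩
        exact ⟨hzP, (hsub hxZ₁).2⟩
      have hG'ne : {z ∈ genProd V₁ V₂ | eval (fun i => z (Sum.inl i)) g₁ = 0} ≠ genProd V₁ V₂ := by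
        obtain ⟨x₁, hx₁V, hx₁n⟩ : ∃ x₁ ∈ V₁, ¬ (eval x₁ g₁ = 0) := by
          by_contra hc
          push_neg at hc
          exact hG₁ne (Set.Subset.antisymm (sep_subset _ _) fun x hx => ⟨hx, hc x hx⟩)
        intro hc
        have hmem : Sum.elim x₁ y₀ ∈
            {z ∈ genProd V₁ V₂ | eval (fun i => z (Sum.inl i)) g₁ = 0} := by
          rw [hc]; exact elim_mem hx₁V hy₀V
        exact hx₁n hmem.2
      have hG'F := hmaxP _ hG'face hG'ne hFsubG'
      refine Set.Subset.antisymm ?_ hsub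
      rintro x ⟨hxV, hx0⟩
      have hzG' : Sum.elim x y₀ ∈ {z ∈ genProd V₁ V₂ | eval (fun i => z (Sum.inl i)) g₁ = 0} :=
        ⟨elim_mem hxV hy₀V, hx0⟩
      rw [hG'F, hstruct] at hzG'
      rw [hZ₁A]
      exact ⟨hxV, hzG'.2.1⟩
  · ext r
    constructor
    · rintro ⟨z, hzP, rfl⟩
      refine ⟨_, hzP.1, ?_⟩
      show eval (fun i => z (Sum.inl i)) (part₁ ℓ + C m₂) = eval z ℓ
      rw [map_add, eval_C, eval_decomp haff, hB _ hzP.2]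
    · rintro ⟨x, hxV, rfl⟩
      refine ⟨Sum.elim x y₀, elim_mem hxV hy₀V, ?_⟩
      show eval (Sum.elim x y₀) ℓ = eval x (part₁ ℓ + C m₂)
      rw [map_add, eval_C, eval_decomp haff]
      show eval x (part₁ ℓ) + eval y₀ (part₂ ℓ) = eval x (part₁ ℓ) + m₂
      rw [hB y₀ hy₀V]

lemma facetDefining_unlift₂ (hV₁ne : V₁.Nonempty)
    {ℓ : MvPolynomial (ι₁ ⊕ ι₂) ℝ} (haff : IsAffLin ℓ)
    (hface : IsFacetOf (genProd V₁ V₂) {z ∈ genProd V₁ V₂ | eval z ℓ = 0})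
    {m₁ m₂ : ℝ} (hm : m₁ + m₂ = 0)
    (hmin₂ : ∀ y ∈ V₂, m₂ ≤ eval y (part₂ ℓ))
    (hstruct : {z ∈ genProd V₁ V₂ | eval z ℓ = 0} =
      {z ∈ genProd V₁ V₂ | eval (fun i => z (Sum.inl i)) (part₁ ℓ) = m₁
        ∧ eval (fun j => z (Sum.inr j)) (part₂ ℓ) = m₂})
    (hA : ∀ x ∈ V₁, eval x (part₁ ℓ) = m₁) :
    IsFacetDefining V₂ (part₂ ℓ + C m₁) ∧
      (fun z => eval z ℓ) '' genProd V₁ V₂ = (fun y => eval y (part₂ ℓ + C m₁)) '' V₂ := by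
  obtain ⟨hfaceP, hFneP, hmaxP⟩ := hface
  obtain ⟨x₀, hx₀V⟩ := hV₁ne
  have haff₂ : IsAffLin (part₂ ℓ + C m₁) := by
    refine (totalDegree_add _ _).trans (max_le (affLin_part₂ haff) ?_)
    simp [totalDegree_C]
  have hZ₂B : {y ∈ V₂ | eval y (part₂ ℓ + C m₁) = 0} = {y ∈ V₂ | eval y (part₂ ℓ) = m₂} := by
    ext y
    simp only [mem_sep_iff, map_add, eval_C]
    constructor
    · rintro ⟨hyV, h0⟩
      exact ⟨hyV, by linarith⟩
    · rintro ⟨hyV, h0⟩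
      exact ⟨hyV, by linarith⟩
  have hnn₂ : NonnegOn V₂ (part₂ ℓ + C m₁) := by
    intro y hy
    rw [map_add, eval_C]
    have := hmin₂ y hy
    linarith
  constructor
  · refine ⟨haff₂, hnn₂, ⟨part₂ ℓ + C m₁, haff₂, hnn₂, rfl⟩, ?_, ?_⟩
    · intro hc
      rw [hZ₂B] at hc
      apply hFneP
      refine Set.Subset.antisymm (sep_subset _ _) fun z hzP => ?_
      rw [hstruct]
      refine ⟨hzP, hA _ hzP.1, ?_⟩
      have hym : (fun j => z (Sum.inr j)) ∈ {y ∈ V₂ | eval y (part₂ ℓ) = m₂} := by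
        rw [hc]; exact hzP.2
      exact hym.2
    · intro G₂ hG₂face hG₂ne hsub
      obtain ⟨g₂, hg₂aff, hg₂nn, hG₂eq⟩ := hG₂face
      subst hG₂eq
      have hG'face : IsFaceOf (genProd V₁ V₂)
          {z ∈ genProd V₁ V₂ | eval (fun j => z (Sum.inr j)) g₂ = 0} :=
        face_prod₂ hg₂aff (m := 0) hg₂nn
      have hFsubG' : {z ∈ genProd V₁ V₂ | eval z ℓ = 0} ⊆
          {z ∈ genProd V₁ V₂ | eval (fun j => z (Sum.inr j)) g₂ = 0} := by
        intro z hz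
        rw [hstruct] at hz
        obtain ⟨hzP, h1, h2⟩ := hz
        have hyZ₂ : (fun j => z (Sum.inr j)) ∈ {y ∈ V₂ | eval y (part₂ ℓ + C m₁) = 0} := by
          rw [hZ₂B]; exact ⟨hzP.2, h2⟩
        exact ⟨hzP, (hsub hyZ₂).2⟩
      have hG'ne : {z ∈ genProd V₁ V₂ | eval (fun j => z (Sum.inr j)) g₂ = 0} ≠ genProd V₁ V₂ := by
        obtain ⟨y₁, hy₁V, hy₁n⟩ : ∃ y₁ ∈ V₂, ¬ (eval y₁ g₂ = 0) := by
          by_contra hc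
          push_neg at hc
          exact hG₂ne (Set.Subset.antisymm (sep_subset _ _) fun y hy => ⟨hy, hc y hy⟩)
        intro hc
        have hmem : Sum.elim x₀ y₁ ∈
            {z ∈ genProd V₁ V₂ | eval (fun j => z (Sum.inr j)) g₂ = 0} := by
          rw [hc]; exact elim_mem hx₀V hy₁V
        exact hy₁n hmem.2
      have hG'F := hmaxP _ hG'face hG'ne hFsubG'
      refine Set.Subset.antisymm ?_ hsub
      rintro y ⟨hyV, hy0⟩
      have hzG' : Sum.elim x₀ y ∈ {z ∈ genProd V₁ V₂ | eval (fun j => z (Sum.inr j)) g₂ = 0} :=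
        ⟨elim_mem hx₀V hyV, hy0⟩
      rw [hG'F, hstruct] at hzG'
      rw [hZ₂B]
      exact ⟨hyV, hzG'.2.2⟩
  · ext r
    constructor
    · rintro ⟨z, hzP, rfl⟩
      refine ⟨_, hzP.2, ?_⟩
      show eval (fun j => z (Sum.inr j)) (part₂ ℓ + C m₁) = eval z ℓ
      rw [map_add, eval_C, eval_decomp haff, hA _ hzP.1]
      ring
    · rintro ⟨y, hyV, rfl⟩
      refine ⟨Sum.elim x₀ y, elim_mem hx₀V hyV, ?_⟩
      show eval (Sum.elim x₀ y) ℓ = eval y (part₂ ℓ + C m₁)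
      rw [map_add, eval_C, eval_decomp haff]
      show eval x₀ (part₁ ℓ) + eval y (part₂ ℓ) = eval y (part₂ ℓ) + m₁
      rw [hA x₀ hx₀V, add_comm]


lemma LS_prod_subset_left (hV₁fin : V₁.Finite) (hV₂fin : V₂.Finite)
    (hV₁ne : V₁.Nonempty) (hV₂ne : V₂.Nonempty) {k}
    (hk : k ∈ LS (genProd V₁ V₂)) : k ∈ LS V₁ := by
  intro ℓ₁ hℓ₁
  by_cases hFne : {x ∈ V₁ | eval x ℓ₁ = 0}.Nonempty
  · obtain ⟨hfd, himg⟩ := facetDefining_lift₁ hV₁fin hV₂fin hV₁ne hV₂ne hℓ₁ hFne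
    rw [← himg]
    exact hk _ hfd
  · rw [Set.not_nonempty_iff_eq_empty] at hFne
    rw [const_of_facet_empty hV₁fin hV₁ne hℓ₁ hFne]
    exact one_le_of_mem_LS (genProd_finite hV₁fin hV₂fin) (genProd_nonempty hV₁ne hV₂ne) hk

lemma LS_prod_subset_right (hV₁fin : V₁.Finite) (hV₂fin : V₂.Finite)
    (hV₁ne : V₁.Nonempty) (hV₂ne : V₂.Nonempty) {k}
    (hk : k ∈ LS (genProd V₁ V₂)) : k ∈ LS V₂ := by
  intro ℓ₂ hℓ₂
  by_cases hFne : {y ∈ V₂ | eval y ℓ₂ = 0}.Nonempty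
  · obtain ⟨hfd, himg⟩ := facetDefining_lift₂ hV₁fin hV₂fin hV₁ne hV₂ne hℓ₂ hFne
    rw [← himg]
    exact hk _ hfd
  · rw [Set.not_nonempty_iff_eq_empty] at hFne
    rw [const_of_facet_empty hV₂fin hV₂ne hℓ₂ hFne]
    exact one_le_of_mem_LS (genProd_finite hV₁fin hV₂fin) (genProd_nonempty hV₁ne hV₂ne) hk

lemma LS_inter_subset_prod (hV₁fin : V₁.Finite) (hV₂fin : V₂.Finite)
    (hV₁ne : V₁.Nonempty) (hV₂ne : V₂.Nonempty) {k}
    (hk₁ : k ∈ LS V₁) (hk₂ : k ∈ LS V₂) : k ∈ LS (genProd V₁ V₂) := by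
  intro ℓ hℓ
  obtain ⟨haff, hnn, hface⟩ := hℓ
  by_cases hFne : {z ∈ genProd V₁ V₂ | eval z ℓ = 0}.Nonempty
  · obtain ⟨m₁, m₂, hm, hmin₁, hmin₂, hAne, hBne, hstruct⟩ :=
      face_structure hV₁fin hV₂fin hV₁ne hV₂ne haff hnn hFne
    by_cases hGP : {z ∈ genProd V₁ V₂ | eval (fun i => z (Sum.inl i)) (part₁ ℓ) = m₁}
        = genProd V₁ V₂
    · have hA : ∀ x ∈ V₁, eval x (part₁ ℓ) = m₁ := by
        intro x hx
        obtain ⟨y₀, hy₀⟩ := hV₂ne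
        have hmem : Sum.elim x y₀ ∈
            {z ∈ genProd V₁ V₂ | eval (fun i => z (Sum.inl i)) (part₁ ℓ) = m₁} := by
          rw [hGP]; exact elim_mem hx hy₀
        exact hmem.2
      obtain ⟨hfd₂, himg⟩ := facetDefining_unlift₂ hV₁ne haff hface hm hmin₂ hstruct hA
      rw [himg]
      exact hk₂ _ hfd₂
    · have hGface : IsFaceOf (genProd V₁ V₂)
          {z ∈ genProd V₁ V₂ | eval (fun i => z (Sum.inl i)) (part₁ ℓ) = m₁} :=
        face_prod₁ (affLin_part₁ haff) hmin₁
      have hFsubG : {z ∈ genProd V₁ V₂ | eval z ℓ = 0} ⊆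
          {z ∈ genProd V₁ V₂ | eval (fun i => z (Sum.inl i)) (part₁ ℓ) = m₁} := by
        intro z hz
        rw [hstruct] at hz
        exact ⟨hz.1, hz.2.1⟩
      have hGF := hface.2.2 _ hGface hGP hFsubG
      have hB : ∀ y ∈ V₂, eval y (part₂ ℓ) = m₂ := by
        intro y hy
        obtain ⟨xA, hxAV, hxAm⟩ := hAne
        have hzG : Sum.elim xA y ∈
            {z ∈ genProd V₁ V₂ | eval (fun i => z (Sum.inl i)) (part₁ ℓ) = m₁} :=
          ⟨elim_mem hxAV hy, hxAm⟩
        rw [hGF, hstruct] at hzG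
        exact hzG.2.2
      obtain ⟨hfd₁, himg⟩ := facetDefining_unlift₁ hV₂ne haff hface hm hmin₁ hstruct hB
      rw [himg]
      exact hk₁ _ hfd₁
  · rw [Set.not_nonempty_iff_eq_empty] at hFne
    rw [const_of_facet_empty (genProd_finite hV₁fin hV₂fin) (genProd_nonempty hV₁ne hV₂ne)
      ⟨haff, hnn, hface⟩ hFne]
    exact one_le_of_mem_LS hV₁fin hV₁ne hk₁

lemma LS_prod_eq (hV₁fin : V₁.Finite) (hV₂fin : V₂.Finite)
    (hV₁ne : V₁.Nonempty) (hV₂ne : V₂.Nonempty) :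
    LS (genProd V₁ V₂) = LS V₁ ∩ LS V₂ := by
  ext k
  constructor
  · exact fun hk => ⟨LS_prod_subset_left hV₁fin hV₂fin hV₁ne hV₂ne hk,
      LS_prod_subset_right hV₁fin hV₂fin hV₁ne hV₂ne hk⟩
  · rintro ⟨hk₁, hk₂⟩
    exact LS_inter_subset_prod hV₁fin hV₂fin hV₁ne hV₂ne hk₁ hk₂

end Level

end ThAux

/-- For finite (nonempty) point configurations `V₁ ⊆ ℝ^{d₁}` and
`V₂ ⊆ ℝ^{d₂}`, the Theta rank of the product configuration satisfies
`Th(V₁ × V₂) = max (Th V₁) (Th V₂)`, and likewise for the levelness. -/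
theorem theta_levelness_of_prod {d₁ d₂ : ℕ}
    (V₁ : Set (Fin d₁ → ℝ)) (V₂ : Set (Fin d₂ → ℝ))
    (hV₁fin : V₁.Finite) (hV₂fin : V₂.Finite)
    (hV₁ne : V₁.Nonempty) (hV₂ne : V₂.Nonempty) :
    thetaRank (prodConfig V₁ V₂) = max (thetaRank V₁) (thetaRank V₂) ∧
      levelness (prodConfig V₁ V₂) = max (levelness V₁) (levelness V₂) := by
  constructor
  · have h1 : thetaRank (prodConfig V₁ V₂) = sInf (ThAux.TS (ThAux.genProd V₁ V₂)) := rfl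
    rw [h1, ThAux.TS_prod_eq hV₁fin hV₂fin hV₁ne hV₂ne,
      ThAux.sInf_inter_max (fun hkk hk => ThAux.TS_upward hkk hk)
        (fun hkk hk => ThAux.TS_upward hkk hk)
        (ThAux.TS_nonempty hV₁fin) (ThAux.TS_nonempty hV₂fin)]
    rfl
  · have h1 : levelness (prodConfig V₁ V₂) = sInf (ThAux.LS (ThAux.genProd V₁ V₂)) := rfl
    rw [h1, ThAux.LS_prod_eq hV₁fin hV₂fin hV₁ne hV₂ne,
      ThAux.sInf_inter_max (fun hkk hk => ThAux.LS_upward hkk hk)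
        (fun hkk hk => ThAux.LS_upward hkk hk)
        (ThAux.LS_nonempty hV₁fin) (ThAux.LS_nonempty hV₂fin)]
    rfl
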